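/- In the full mean-field toy model with 2 plants and 3 pollinators, the candidate feasible equilibrium abundances are $s_1^*=s_2^*=p_1/q$, $s_3^*=s_5^*=p_2/q$, $s_4^*=p_3/q$ with $p_1=25+5\beta_0-2\beta_0^2+10\gamma_0-2\beta_0\gamma_0$, $p_2=25-\beta_0^2+5\gamma_0-2\beta_0\gamma_0-\gamma_0^2$, $p_3=25-\beta_0^2+10\gamma_0+\gamma_0^2$, $q=125+50\beta_0-5\beta_0^2-2\beta_0^3-15\gamma_0^2+2\beta_0\gamma_0^2$; i.e., these values satisfy the equilibrium equations whenever $q\neq 0$. -/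

import Mathlib

/-- Full mean-field toy model (plants 1,2; pollinators 3,4,5; edges
(1,3),(1,4),(2,4),(2,5); α = 1, β = 5, h = 0): the explicit rational values
`p₁/q, p₂/q, p₃/q` form an equilibrium of the Lotka–Volterra dynamics whenever
`q ≠ 0`. -/
theorem fullMeanField_toy_equilibrium (β0 γ0 : ℝ)
    (p1 p2 p3 q s1 s2 s3 s4 s5 : ℝ)
    (hp1 : p1 = 25 + 5*β0 - 2*β0^2 + 10*γ0 - 2*β0*γ0)
    (hp2 : p2 = 25 - β0^2 + 5*γ0 - 2*β0*γ0 - γ0^2)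
    (hp3 : p3 = 25 - β0^2 + 10*γ0 + γ0^2)
    (hq : q = 125 + 50*β0 - 5*β0^2 - 2*β0^3 - 15*γ0^2 + 2*β0*γ0^2)
    (hq0 : q ≠ 0)
    (hs1 : s1 = p1 / q) (hs2 : s2 = p1 / q)
    (hs3 : s3 = p2 / q) (hs5 : s5 = p2 / q) (hs4 : s4 = p3 / q) :
    1 - 5*s1 - β0*s2 + γ0*(s3 + s4) = 0 ∧
    1 - 5*s2 - β0*s1 + γ0*(s4 + s5) = 0 ∧
    1 - 5*s3 - β0*(s4 + s5) + γ0*s1 = 0 ∧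
    1 - 5*s4 - β0*(s3 + s5) + γ0*(s1 + s2) = 0 ∧
    1 - 5*s5 - β0*(s3 + s4) + γ0*s2 = 0 := by
  subst hs1 hs2 hs3 hs4 hs5 hp1 hp2 hp3
  refine ⟨?_, ?_, ?_, ?_, ?_⟩ <;> field_simp <;> subst hq <;> ring
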